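/- Let δ > 0 and let 𝒜 ⊂ ℝ be a finite set satisfying ∫_ℝ (Σ_{α∈𝒜} 1_{[α−δ, α+δ]}(x))² dx ≤ S for some S > 0. Then there exists an absolute constant C > 0 such that for every ξ_0 ∈ ℝ and every choice of coefficients (c_α)_{α∈𝒜} ⊂ ℂ with |c_α| = 1 for all α: δ² ∫_{ξ_0}^{ξ_0 + δ^{−1}} |Σ_{α∈𝒜} c_α e^{iαξ}|² dξ ≤ C S. -/

import Mathlib

open MeasureTheory Filter Set
open scoped Real BigOperators

noncomputable section

open Finset

noncomputable def uV : ℤ → ℝ := fun m =>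
  if m = 0 ∨ m = -1 then 2 else if 0 < m then ((m:ℝ))⁻¹^2 else (((m:ℝ)+1))⁻¹^2

lemma uV_nonneg (m : ℤ) : 0 ≤ uV m := by
  unfold uV
  split
  · norm_num
  · split <;> positivity

lemma uV_icc (N : ℕ) :
    ∑ m ∈ Finset.Icc (-(N:ℤ)-2) ((N:ℤ)+1), uV m ≤ 8 - 2/((N:ℝ)+1) := by
  induction N with
  | zero =>
      norm_num
      rw [show Finset.Icc (-2:ℤ) 1 = {-2,-1,0,1} by rfl]
      simp [uV]
      norm_num
  | succ n ih =>
      rw [show (-(((n+1):ℕ):ℤ)-2) = -(n:ℤ)-3 by push_cast; ring,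
          show ((((n+1):ℕ):ℤ)+1) = (n:ℤ)+2 by push_cast; ring,
          show ((((n+1):ℕ)):ℝ)+1 = ((n:ℝ)+2) by push_cast; ring]
      have hins : Finset.Icc (-(n:ℤ)-3) ((n:ℤ)+2)
          = insert (-(n:ℤ)-3) (insert ((n:ℤ)+2) (Finset.Icc (-(n:ℤ)-2) ((n:ℤ)+1))) := by
        ext m; simp [Finset.mem_Icc]; omega
      have h1 : ((-(n:ℤ)-3) : ℤ) ∉ insert ((n:ℤ)+2) (Finset.Icc (-(n:ℤ)-2) ((n:ℤ)+1)) := by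
        simp [Finset.mem_Icc]; omega
      have h2 : ((n:ℤ)+2) ∉ Finset.Icc (-(n:ℤ)-2) ((n:ℤ)+1) := by
        simp [Finset.mem_Icc]
      have hv1 : uV (-(n:ℤ)-3) = ((n:ℝ)+2)⁻¹^2 := by
        unfold uV
        rw [if_neg (by omega), if_neg (by omega)]
        push_cast
        rw [show (-(n:ℝ)-3+1) = -((n:ℝ)+2) by ring, inv_neg]
        ring
      have hv2 : uV ((n:ℤ)+2) = ((n:ℝ)+2)⁻¹^2 := by
        unfold uV
        rw [if_neg (by omega), if_pos (by omega)]
        push_cast; ring_nf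
      have key : 2*((n:ℝ)+2)⁻¹^2 ≤ 2/((n:ℝ)+1) - 2/((n:ℝ)+2) := by
        have hd : 2/((n:ℝ)+1) - 2/((n:ℝ)+2) = 2/(((n:ℝ)+1)*((n:ℝ)+2)) := by
          field_simp; ring
        have hd2 : 2*((n:ℝ)+2)⁻¹^2 = 2/(((n:ℝ)+2)*((n:ℝ)+2)) := by
          field_simp
        rw [hd, hd2]
        gcongr
        · linarith
      calc ∑ m ∈ Finset.Icc (-(n:ℤ)-3) ((n:ℤ)+2), uV m
          = uV (-(n:ℤ)-3) + (uV ((n:ℤ)+2) + ∑ m ∈ Finset.Icc (-(n:ℤ)-2) ((n:ℤ)+1), uV m) := by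
            rw [hins, Finset.sum_insert h1, Finset.sum_insert h2]
        _ ≤ ((n:ℝ)+2)⁻¹^2 + (((n:ℝ)+2)⁻¹^2 + (8 - 2/((n:ℝ)+1))) := by
            rw [hv1, hv2]; linarith
        _ ≤ 8 - 2/((n:ℝ)+2) := by linarith [key]

lemma uV_sum_le (T : Finset ℤ) : ∑ m ∈ T, uV m ≤ 8 := by
  set N := T.sup Int.natAbs with hN
  have hsub : T ⊆ Finset.Icc (-(N:ℤ)-2) ((N:ℤ)+1) := by
    intro m hm
    have : m.natAbs ≤ N := Finset.le_sup hm
    simp [Finset.mem_Icc]; omega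
  calc ∑ m ∈ T, uV m ≤ ∑ m ∈ Finset.Icc (-(N:ℤ)-2) ((N:ℤ)+1), uV m :=
        Finset.sum_le_sum_of_subset_of_nonneg hsub (fun i _ _ => uV_nonneg i)
    _ ≤ 8 - 2/((N:ℝ)+1) := uV_icc N
    _ ≤ 8 := by
        have : (0:ℝ) < 2/((N:ℝ)+1) := by positivity
        linarith
open MeasureTheory Set

noncomputable section

variable (δ : ℝ)

def ind (α : ℝ) : ℝ → ℝ := (Set.Icc (α - δ) (α + δ)).indicator (fun _ => (1:ℝ))

lemma ind_shift (β c x : ℝ) :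
    ind δ β (x - c) = (Set.Icc (β + c - δ) (β + c + δ)).indicator (fun _ => (1:ℝ)) x := by
  have h : x - c ∈ Set.Icc (β - δ) (β + δ) ↔ x ∈ Set.Icc (β + c - δ) (β + c + δ) := by
    simp only [Set.mem_Icc]
    constructor <;> (intro h; constructor <;> linarith [h.1, h.2])
  simp only [ind, Set.indicator_apply]
  rw [if_congr h rfl rfl]

lemma ind_mul_shift (α β c : ℝ) : (fun x => ind δ α x * ind δ β (x - c))
    = (Set.Icc (max (α - δ) (β + c - δ)) (min (α + δ) (β + c + δ))).indicator (fun _ => (1:ℝ)) := by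
  funext x
  rw [ind_shift]
  show (Set.Icc (α - δ) (α + δ)).indicator (fun _ => (1:ℝ)) x * _ = _
  rw [← Set.Icc_inter_Icc, ← Set.inter_indicator_mul]
  norm_num

lemma integral_indicator_Icc (a b : ℝ) (hab : a ≤ b) :
    ∫ x, (Set.Icc a b).indicator (fun _ => (1:ℝ)) x = b - a := by
  rw [MeasureTheory.integral_indicator_const _ measurableSet_Icc]
  simp [Real.volume_Icc, ENNReal.toReal_ofReal (sub_nonneg.2 hab), hab]

lemma ind_integrable (α : ℝ) : Integrable (ind δ α) := by
  refine (integrable_indicator_iff measurableSet_Icc).2 ?_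
  exact integrableOn_const measure_Icc_lt_top.ne

lemma ind_nonneg (α x : ℝ) : 0 ≤ ind δ α x :=
  Set.indicator_nonneg (fun _ _ => zero_le_one) x

lemma ind_le_one (α x : ℝ) : ind δ α x ≤ 1 := by
  unfold ind
  by_cases h : x ∈ Set.Icc (α - δ) (α + δ) <;> simp [h]

def fcnt (𝒜 : Finset ℝ) : ℝ → ℝ := fun x => ∑ α ∈ 𝒜, ind δ α x

lemma fcnt_integrable (𝒜 : Finset ℝ) : Integrable (fcnt δ 𝒜) :=
  integrable_finset_sum _ (fun α _ => ind_integrable δ α)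

lemma fcnt_nonneg (𝒜 : Finset ℝ) (x : ℝ) : 0 ≤ fcnt δ 𝒜 x :=
  Finset.sum_nonneg (fun α _ => ind_nonneg δ α x)

lemma fcnt_le (𝒜 : Finset ℝ) (x : ℝ) : fcnt δ 𝒜 x ≤ 𝒜.card := by
  calc fcnt δ 𝒜 x ≤ ∑ _α ∈ 𝒜, (1:ℝ) := Finset.sum_le_sum (fun α _ => ind_le_one δ α x)
    _ = 𝒜.card := by simp

lemma fcnt_measurable (𝒜 : Finset ℝ) : Measurable (fcnt δ 𝒜) :=
  Finset.measurable_sum _ (fun α _ => (measurable_const.indicator measurableSet_Icc))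

lemma fcnt_sq_integrable (𝒜 : Finset ℝ) : Integrable (fun x => fcnt δ 𝒜 x ^ 2) := by
  refine Integrable.mono' ((fcnt_integrable δ 𝒜).const_mul (𝒜.card : ℝ))
    (((fcnt_measurable δ 𝒜).pow_const 2).aestronglyMeasurable) ?_
  filter_upwards with x
  rw [Real.norm_eq_abs, abs_of_nonneg (sq_nonneg _)]
  nlinarith [fcnt_le δ 𝒜 x, fcnt_nonneg δ 𝒜 x]

lemma class_count (hδ : 0 < δ) (𝒜 : Finset ℝ) (S : ℝ)
    (hInt : (∫ x : ℝ, (fcnt δ 𝒜 x) ^ 2) ≤ S) (c : ℝ) :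
    δ * (((𝒜 ×ˢ 𝒜).filter (fun p => |p.1 - p.2 - c| ≤ δ)).card : ℝ) ≤ S := by
  classical
  set P := (𝒜 ×ˢ 𝒜).filter (fun p => |p.1 - p.2 - c| ≤ δ) with hP
  -- each term is an indicator of an interval
  have hterm_int : ∀ p : ℝ × ℝ, Integrable (fun x => ind δ p.1 x * ind δ p.2 (x - c)) := by
    intro p
    rw [ind_mul_shift]
    exact (integrable_indicator_iff measurableSet_Icc).2
      (integrableOn_const measure_Icc_lt_top.ne)
  have hterm_nonneg : ∀ p : ℝ × ℝ, 0 ≤ ∫ x, ind δ p.1 x * ind δ p.2 (x - c) := by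
    intro p
    exact integral_nonneg (fun x => mul_nonneg (ind_nonneg δ _ x) (ind_nonneg δ _ _))
  -- expansion
  have hexp : (∫ x, fcnt δ 𝒜 x * fcnt δ 𝒜 (x - c))
      = ∑ p ∈ 𝒜 ×ˢ 𝒜, ∫ x, ind δ p.1 x * ind δ p.2 (x - c) := by
    have : (fun x => fcnt δ 𝒜 x * fcnt δ 𝒜 (x - c))
        = fun x => ∑ p ∈ 𝒜 ×ˢ 𝒜, ind δ p.1 x * ind δ p.2 (x - c) := by
      funext x
      rw [fcnt, fcnt, Finset.sum_mul_sum, Finset.sum_product]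
    rw [this, integral_finset_sum _ (fun p _ => hterm_int p)]
  -- upper bound via AM-GM and translation invariance
  have hshift_sq : Integrable (fun x => fcnt δ 𝒜 (x - c) ^ 2) :=
    (fcnt_sq_integrable δ 𝒜).comp_sub_right c
  have hprod_int : Integrable (fun x => fcnt δ 𝒜 x * fcnt δ 𝒜 (x - c)) := by
    have : (fun x => fcnt δ 𝒜 x * fcnt δ 𝒜 (x - c))
        = fun x => ∑ p ∈ 𝒜 ×ˢ 𝒜, ind δ p.1 x * ind δ p.2 (x - c) := by
      funext x
      rw [fcnt, fcnt, Finset.sum_mul_sum, Finset.sum_product]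
    rw [this]
    exact integrable_finset_sum _ (fun p _ => hterm_int p)
  have hupper : (∫ x, fcnt δ 𝒜 x * fcnt δ 𝒜 (x - c)) ≤ S := by
    have h1 : (∫ x, fcnt δ 𝒜 x * fcnt δ 𝒜 (x - c))
        ≤ ∫ x, (fcnt δ 𝒜 x ^ 2 + fcnt δ 𝒜 (x - c) ^ 2) / 2 := by
      refine integral_mono hprod_int (((fcnt_sq_integrable δ 𝒜).add hshift_sq).div_const 2) ?_
      intro x
      have := sq_nonneg (fcnt δ 𝒜 x - fcnt δ 𝒜 (x - c))
      simp only
      nlinarith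
    have h2 : (∫ x, (fcnt δ 𝒜 x ^ 2 + fcnt δ 𝒜 (x - c) ^ 2) / 2)
        = ((∫ x, fcnt δ 𝒜 x ^ 2) + ∫ x, fcnt δ 𝒜 (x - c) ^ 2) / 2 := by
      rw [integral_div, integral_add (fcnt_sq_integrable δ 𝒜) hshift_sq]
    have h3 : (∫ x, fcnt δ 𝒜 (x - c) ^ 2) = ∫ x, fcnt δ 𝒜 x ^ 2 :=
      integral_sub_right_eq_self (fun x => fcnt δ 𝒜 x ^ 2) c
    rw [h2, h3] at h1
    linarith
  -- lower bound for pairs in the class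
  have hlow : ∀ p ∈ P, δ ≤ ∫ x, ind δ p.1 x * ind δ p.2 (x - c) := by
    intro p hp
    rw [hP, Finset.mem_filter] at hp
    obtain ⟨-, habs⟩ := hp
    obtain ⟨ha, hb⟩ := abs_le.1 habs
    have hmm : δ ≤ min (p.1 + δ) (p.2 + c + δ) - max (p.1 - δ) (p.2 + c - δ) := by
      rcases le_total p.1 (p.2 + c) with h | h
      · rw [min_eq_left (by linarith), max_eq_right (by linarith)]
        linarith
      · rw [min_eq_right (by linarith), max_eq_left (by linarith)]
        linarith
    rw [ind_mul_shift, integral_indicator_Icc _ _ (by linarith)]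
    linarith
  -- combine
  have hcard : δ * (P.card : ℝ) ≤ ∑ p ∈ P, ∫ x, ind δ p.1 x * ind δ p.2 (x - c) := by
    rw [mul_comm]
    calc (P.card : ℝ) * δ = ∑ _p ∈ P, δ := by rw [Finset.sum_const, nsmul_eq_mul]
      _ ≤ _ := Finset.sum_le_sum hlow
  calc δ * (P.card : ℝ)
      ≤ ∑ p ∈ P, ∫ x, ind δ p.1 x * ind δ p.2 (x - c) := hcard
    _ ≤ ∑ p ∈ 𝒜 ×ˢ 𝒜, ∫ x, ind δ p.1 x * ind δ p.2 (x - c) :=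
        Finset.sum_le_sum_of_subset_of_nonneg (Finset.filter_subset _ _)
          (fun p _ _ => hterm_nonneg p)
    _ = ∫ x, fcnt δ 𝒜 x * fcnt δ 𝒜 (x - c) := hexp.symm
    _ ≤ S := hupper

end
open MeasureTheory Set intervalIntegral

noncomputable section

lemma norm_exp_I_mul (t ξ : ℝ) : ‖Complex.exp (Complex.I * t * ξ)‖ = 1 := by
  rw [Complex.norm_exp]
  simp [Complex.mul_re]

lemma exp_I_cont (t : ℝ) : Continuous fun ξ : ℝ => Complex.exp (Complex.I * t * ξ) := by
  exact Complex.continuous_exp.comp (continuous_const.mul Complex.continuous_ofReal)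

lemma sq_abs_sum_expand (𝒜 : Finset ℝ) (coef : ℝ → ℂ) (ξ : ℝ) :
    ‖∑ α ∈ 𝒜, coef α * Complex.exp (Complex.I * (α:ℂ) * (ξ:ℂ))‖^2
    = (∑ p ∈ 𝒜 ×ˢ 𝒜, (coef p.1 * (starRingEnd ℂ) (coef p.2))
        * Complex.exp (Complex.I * ((p.1 - p.2 : ℝ):ℂ) * (ξ:ℂ))).re := by
  rw [Complex.sq_norm]
  have h1 : ∀ (α β : ℝ), (coef α * Complex.exp (Complex.I*(α:ℂ)*(ξ:ℂ)))
      * (starRingEnd ℂ) (coef β * Complex.exp (Complex.I*(β:ℂ)*(ξ:ℂ)))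
      = coef α * (starRingEnd ℂ) (coef β)
        * Complex.exp (Complex.I * ((α - β : ℝ):ℂ) * (ξ:ℂ)) := by
    intro α β
    rw [map_mul, ← Complex.exp_conj]
    have hc : (starRingEnd ℂ) (Complex.I * (β:ℂ) * (ξ:ℂ)) = -(Complex.I * (β:ℂ) * (ξ:ℂ)) := by
      simp [map_mul, Complex.conj_I, Complex.conj_ofReal]
    rw [hc, mul_mul_mul_comm, ← Complex.exp_add]
    congr 2
    push_cast
    ring
  have h2 : (∑ p ∈ 𝒜 ×ˢ 𝒜, (coef p.1 * (starRingEnd ℂ) (coef p.2))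
        * Complex.exp (Complex.I * ((p.1 - p.2 : ℝ):ℂ) * (ξ:ℂ)))
      = (∑ α ∈ 𝒜, coef α * Complex.exp (Complex.I * (α:ℂ) * (ξ:ℂ)))
        * (starRingEnd ℂ) (∑ α ∈ 𝒜, coef α * Complex.exp (Complex.I * (α:ℂ) * (ξ:ℂ))) := by
    rw [map_sum, Finset.sum_mul_sum, Finset.sum_product]
    exact Finset.sum_congr rfl (fun α _ => Finset.sum_congr rfl (fun β _ => (h1 α β).symm))
  rw [h2, Complex.mul_conj]
  simp

end

noncomputable section

set_option maxHeartbeats 1000000 in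
lemma integral_sq_abs (𝒜 : Finset ℝ) (coef : ℝ → ℂ) (a b : ℝ) :
    (∫ ξ in a..b, ‖∑ α ∈ 𝒜, coef α * Complex.exp (Complex.I * (α:ℂ) * (ξ:ℂ))‖^2)
    = (∑ p ∈ 𝒜 ×ˢ 𝒜, (coef p.1 * (starRingEnd ℂ) (coef p.2))
        * ∫ ξ in a..b, Complex.exp (Complex.I * ((p.1 - p.2 : ℝ):ℂ) * (ξ:ℂ))).re := by
  have hGcont : Continuous (fun ξ : ℝ => ∑ p ∈ 𝒜 ×ˢ 𝒜, (coef p.1 * (starRingEnd ℂ) (coef p.2))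
      * Complex.exp (Complex.I * ((p.1 - p.2 : ℝ):ℂ) * (ξ:ℂ))) :=
    continuous_finset_sum _ (fun p _ => continuous_const.mul (exp_I_cont _))
  calc (∫ ξ in a..b, ‖∑ α ∈ 𝒜, coef α * Complex.exp (Complex.I * (α:ℂ) * (ξ:ℂ))‖^2)
      = ∫ ξ in a..b, Complex.reCLM (∑ p ∈ 𝒜 ×ˢ 𝒜, (coef p.1 * (starRingEnd ℂ) (coef p.2))
          * Complex.exp (Complex.I * ((p.1 - p.2 : ℝ):ℂ) * (ξ:ℂ))) := by
        simp only [sq_abs_sum_expand, Complex.reCLM_apply]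
    _ = Complex.reCLM (∫ ξ in a..b, ∑ p ∈ 𝒜 ×ˢ 𝒜, (coef p.1 * (starRingEnd ℂ) (coef p.2))
          * Complex.exp (Complex.I * ((p.1 - p.2 : ℝ):ℂ) * (ξ:ℂ))) :=
        Complex.reCLM.intervalIntegral_comp_comm (hGcont.intervalIntegrable a b)
    _ = Complex.reCLM (∑ p ∈ 𝒜 ×ˢ 𝒜, (coef p.1 * (starRingEnd ℂ) (coef p.2))
          * ∫ ξ in a..b, Complex.exp (Complex.I * ((p.1 - p.2 : ℝ):ℂ) * (ξ:ℂ))) := by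
        have hswap : (∫ ξ in a..b, ∑ p ∈ 𝒜 ×ˢ 𝒜, (coef p.1 * (starRingEnd ℂ) (coef p.2))
            * Complex.exp (Complex.I * ((p.1 - p.2 : ℝ):ℂ) * (ξ:ℂ)))
            = ∑ p ∈ 𝒜 ×ˢ 𝒜, ∫ ξ in a..b, (coef p.1 * (starRingEnd ℂ) (coef p.2))
              * Complex.exp (Complex.I * ((p.1 - p.2 : ℝ):ℂ) * (ξ:ℂ)) :=
          intervalIntegral.integral_finset_sum
            (fun p _ => ((continuous_const.mul (exp_I_cont (p.1 - p.2))).intervalIntegrable a b))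
        rw [hswap]
        congr 1
        exact Finset.sum_congr rfl (fun p _ => intervalIntegral.integral_const_mul _ _)
    _ = _ := rfl

def Phi (δ ξ₀ t : ℝ) : ℂ :=
  ∫ s in (0:ℝ)..δ⁻¹, ∫ ξ in (ξ₀ - s)..(ξ₀ - s + 2*δ⁻¹),
    Complex.exp (Complex.I * (t:ℂ) * (ξ:ℂ))

lemma Phi_bound_one (δ ξ₀ t : ℝ) (hδ : 0 < δ) : ‖Phi δ ξ₀ t‖ ≤ 2 * δ⁻¹^2 := by
  have hL : 0 < δ⁻¹ := inv_pos.2 hδ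
  have hinner : ∀ s ∈ Set.uIoc (0:ℝ) δ⁻¹,
      ‖∫ ξ in (ξ₀ - s)..(ξ₀ - s + 2*δ⁻¹), Complex.exp (Complex.I * (t:ℂ) * (ξ:ℂ))‖ ≤ 2*δ⁻¹ := by
    intro s _
    have h := intervalIntegral.norm_integral_le_of_norm_le_const (C := 1)
      (f := fun ξ:ℝ => Complex.exp (Complex.I * (t:ℂ) * (ξ:ℂ)))
      (a := ξ₀ - s) (b := ξ₀ - s + 2*δ⁻¹) (fun ξ _ => le_of_eq (norm_exp_I_mul t ξ))
    calc ‖∫ ξ in (ξ₀ - s)..(ξ₀ - s + 2*δ⁻¹), Complex.exp (Complex.I * (t:ℂ) * (ξ:ℂ))‖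
        ≤ 1 * |ξ₀ - s + 2*δ⁻¹ - (ξ₀ - s)| := h
      _ = 2*δ⁻¹ := by
          rw [show ξ₀ - s + 2*δ⁻¹ - (ξ₀ - s) = 2*δ⁻¹ by ring, abs_of_pos (by positivity),
            one_mul]
  calc ‖Phi δ ξ₀ t‖ ≤ (2*δ⁻¹) * |δ⁻¹ - 0| :=
        intervalIntegral.norm_integral_le_of_norm_le_const hinner
    _ = 2*δ⁻¹^2 := by rw [sub_zero, abs_of_pos hL]; ring

lemma Phi_bound_sq (δ ξ₀ t : ℝ) (hδ : 0 < δ) (ht : t ≠ 0) : ‖Phi δ ξ₀ t‖ ≤ 4 / t^2 := by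
  have hL : 0 < δ⁻¹ := inv_pos.2 hδ
  have habs : (0:ℝ) < |t| := abs_pos.2 ht
  set c : ℂ := Complex.I * (t:ℂ) with hcdef
  have hc : c ≠ 0 := mul_ne_zero Complex.I_ne_zero (Complex.ofReal_ne_zero.2 ht)
  have hnc : ‖c‖ = |t| := by
    rw [hcdef]
    simp [map_mul, Complex.norm_I, Complex.norm_real]
  have hnormexp : ∀ x : ℝ, ‖Complex.exp (c * (x:ℂ))‖ = 1 := fun x => norm_exp_I_mul t x
  have hnormexpneg : ∀ x : ℝ, ‖Complex.exp ((-c) * (x:ℂ))‖ = 1 := by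
    intro x
    rw [show (-c) * (x:ℂ) = Complex.I * ((-t:ℝ):ℂ) * (x:ℂ) by rw [hcdef]; push_cast; ring]
    exact norm_exp_I_mul (-t) x
  have hinner : ∀ s : ℝ, (∫ ξ in (ξ₀ - s)..(ξ₀ - s + 2*δ⁻¹),
      Complex.exp (Complex.I * (t:ℂ) * (ξ:ℂ)))
      = (Complex.exp (c * ((ξ₀ - s + 2*δ⁻¹ : ℝ):ℂ)) - Complex.exp (c * ((ξ₀ - s : ℝ):ℂ)))/c :=
    fun s => integral_exp_mul_complex hc
  have hICont : ∀ (u v : ℝ), IntervalIntegrable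
      (fun s : ℝ => Complex.exp (c * ((ξ₀ - s + u : ℝ):ℂ))) MeasureTheory.volume 0 v := by
    intro u v
    apply Continuous.intervalIntegrable
    exact Complex.continuous_exp.comp (continuous_const.mul
      (Complex.continuous_ofReal.comp (by continuity)))
  have h3 : ∀ k : ℝ, (∫ s in (0:ℝ)..δ⁻¹, Complex.exp (c * ((ξ₀ - s + k : ℝ):ℂ)))
      = Complex.exp (c * ((ξ₀ + k : ℝ):ℂ))
        * ((Complex.exp ((-c) * ((δ⁻¹:ℝ):ℂ)) - Complex.exp ((-c) * ((0:ℝ):ℂ)))/(-c)) := by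
    intro k
    have hpt : ∀ s : ℝ, Complex.exp (c * ((ξ₀ - s + k : ℝ):ℂ))
        = Complex.exp (c * ((ξ₀ + k : ℝ):ℂ)) * Complex.exp ((-c) * (s:ℂ)) := by
      intro s
      rw [← Complex.exp_add]
      congr 1
      push_cast
      ring
    rw [intervalIntegral.integral_congr (fun s _ => hpt s),
      intervalIntegral.integral_const_mul, integral_exp_mul_complex (neg_ne_zero.2 hc)]
  have h3' : (∫ s in (0:ℝ)..δ⁻¹, Complex.exp (c * ((ξ₀ - s : ℝ):ℂ)))
      = Complex.exp (c * ((ξ₀ : ℝ):ℂ))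
        * ((Complex.exp ((-c) * ((δ⁻¹:ℝ):ℂ)) - Complex.exp ((-c) * ((0:ℝ):ℂ)))/(-c)) := by
    have hpt : ∀ s : ℝ, Complex.exp (c * ((ξ₀ - s : ℝ):ℂ))
        = Complex.exp (c * ((ξ₀ : ℝ):ℂ)) * Complex.exp ((-c) * (s:ℂ)) := by
      intro s
      rw [← Complex.exp_add]
      congr 1
      push_cast
      ring
    rw [intervalIntegral.integral_congr (fun s _ => hpt s),
      intervalIntegral.integral_const_mul, integral_exp_mul_complex (neg_ne_zero.2 hc)]
  have h2 : Phi δ ξ₀ t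
      = ((Complex.exp (c * ((ξ₀ + 2*δ⁻¹ : ℝ):ℂ)) - Complex.exp (c * ((ξ₀ : ℝ):ℂ)))
        * ((Complex.exp ((-c) * ((δ⁻¹:ℝ):ℂ)) - Complex.exp ((-c) * ((0:ℝ):ℂ)))/(-c)))/c := by
    unfold Phi
    rw [intervalIntegral.integral_congr (fun s _ => hinner s), intervalIntegral.integral_div,
      intervalIntegral.integral_sub (hICont (2*δ⁻¹) δ⁻¹) (by
        have := hICont 0 δ⁻¹
        simpa using this), h3 (2*δ⁻¹)]
    rw [show (∫ s in (0:ℝ)..δ⁻¹, Complex.exp (c * ((ξ₀ - s : ℝ):ℂ))) = _ from h3']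
    rw [sub_mul]
  rw [h2]
  rw [norm_div, norm_mul, norm_div, hnc, norm_neg, hnc]
  have hb1 : ‖Complex.exp (c * ((ξ₀ + 2*δ⁻¹ : ℝ):ℂ)) - Complex.exp (c * ((ξ₀ : ℝ):ℂ))‖ ≤ 2 := by
    calc _ ≤ ‖Complex.exp (c * ((ξ₀ + 2*δ⁻¹ : ℝ):ℂ))‖ + ‖Complex.exp (c * ((ξ₀ : ℝ):ℂ))‖ :=
          norm_sub_le _ _
      _ ≤ 2 := by rw [hnormexp, hnormexp]; norm_num
  have hb2 : ‖Complex.exp ((-c) * ((δ⁻¹:ℝ):ℂ)) - Complex.exp ((-c) * ((0:ℝ):ℂ))‖ ≤ 2 := by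
    calc _ ≤ ‖Complex.exp ((-c) * ((δ⁻¹:ℝ):ℂ))‖ + ‖Complex.exp ((-c) * ((0:ℝ):ℂ))‖ :=
          norm_sub_le _ _
      _ ≤ 2 := by rw [hnormexpneg, hnormexpneg]; norm_num
  calc ‖Complex.exp (c * ((ξ₀ + 2*δ⁻¹ : ℝ):ℂ)) - Complex.exp (c * ((ξ₀ : ℝ):ℂ))‖
        * (‖Complex.exp ((-c) * ((δ⁻¹:ℝ):ℂ)) - Complex.exp ((-c) * ((0:ℝ):ℂ))‖ / |t|) / |t|
      ≤ 2 * (2 / |t|) / |t| := by gcongr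
    _ = 4 / t^2 := by
        rw [← sq_abs t]
        field_simp
        ring

end

noncomputable section

lemma Einner_cont (t ξ₀ L : ℝ) : Continuous fun s : ℝ =>
    ∫ ξ in (ξ₀ - s)..(ξ₀ - s + 2*L), Complex.exp (Complex.I * (t:ℂ) * (ξ:ℂ)) := by
  by_cases ht : t = 0
  · subst ht
    have heq : (fun s : ℝ => ∫ ξ in (ξ₀ - s)..(ξ₀ - s + 2*L),
        Complex.exp (Complex.I * ((0:ℝ):ℂ) * (ξ:ℂ))) = fun _ : ℝ => ((2*L : ℝ) : ℂ) := by
      funext s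
      have : ∀ ξ : ℝ, Complex.exp (Complex.I * ((0:ℝ):ℂ) * (ξ:ℂ)) = 1 := by
        intro ξ; simp
      rw [intervalIntegral.integral_congr (fun ξ _ => this ξ), intervalIntegral.integral_const]
      rw [show ξ₀ - s + 2*L - (ξ₀ - s) = 2*L by ring]
      simp [Complex.real_smul]
    rw [heq]
    exact continuous_const
  · have hc : (Complex.I * (t:ℂ)) ≠ 0 :=
      mul_ne_zero Complex.I_ne_zero (Complex.ofReal_ne_zero.2 ht)
    have heq : (fun s : ℝ => ∫ ξ in (ξ₀ - s)..(ξ₀ - s + 2*L),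
        Complex.exp (Complex.I * (t:ℂ) * (ξ:ℂ)))
        = fun s : ℝ => (Complex.exp (Complex.I * (t:ℂ) * ((ξ₀ - s + 2*L : ℝ):ℂ))
            - Complex.exp (Complex.I * (t:ℂ) * ((ξ₀ - s : ℝ):ℂ)))/(Complex.I * (t:ℂ)) :=
      funext fun s => integral_exp_mul_complex hc
    rw [heq]
    apply Continuous.div_const
    apply Continuous.sub <;>
      exact Complex.continuous_exp.comp (continuous_const.mul
        (Complex.continuous_ofReal.comp (by continuity)))

set_option maxHeartbeats 1000000 in
lemma analytic_bound (δ ξ₀ : ℝ) (hδ : 0 < δ) (𝒜 : Finset ℝ) (coef : ℝ → ℂ)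
    (hcoef : ∀ α ∈ 𝒜, ‖coef α‖ = 1) :
    (∫ ξ in ξ₀..(ξ₀ + δ⁻¹),
        ‖∑ α ∈ 𝒜, coef α * Complex.exp (Complex.I * (α:ℂ) * (ξ:ℂ))‖^2)
    ≤ δ * ∑ p ∈ 𝒜 ×ˢ 𝒜, ‖Phi δ ξ₀ (p.1 - p.2)‖ := by
  have hL : 0 < δ⁻¹ := inv_pos.2 hδ
  set F : ℝ → ℂ := fun ξ => ∑ α ∈ 𝒜, coef α * Complex.exp (Complex.I * (α:ℂ) * (ξ:ℂ)) with hF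
  have hFcont : Continuous F :=
    continuous_finset_sum _ (fun α _ => continuous_const.mul (exp_I_cont α))
  have habs_cont : Continuous (fun ξ => ‖F ξ‖^2) :=
    (continuous_norm.comp hFcont).pow 2
  have hii : ∀ a b : ℝ, IntervalIntegrable (fun ξ => ‖F ξ‖^2)
      MeasureTheory.volume a b := fun a b => habs_cont.intervalIntegrable a b
  set K : ℝ := ∫ ξ in ξ₀..(ξ₀ + δ⁻¹), ‖F ξ‖^2 with hK
  -- step 1 : K ≤ window integral for each s
  have hKle : ∀ s ∈ Set.Icc (0:ℝ) δ⁻¹,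
      K ≤ ∫ ξ in (ξ₀ - s)..(ξ₀ - s + 2*δ⁻¹), ‖F ξ‖^2 := by
    intro s hs
    have hsplit1 : (∫ ξ in (ξ₀ - s)..ξ₀, ‖F ξ‖^2)
        + ∫ ξ in ξ₀..(ξ₀ + δ⁻¹), ‖F ξ‖^2
        = ∫ ξ in (ξ₀ - s)..(ξ₀ + δ⁻¹), ‖F ξ‖^2 :=
      intervalIntegral.integral_add_adjacent_intervals (hii _ _) (hii _ _)
    have hsplit2 : (∫ ξ in (ξ₀ - s)..(ξ₀ + δ⁻¹), ‖F ξ‖^2)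
        + ∫ ξ in (ξ₀ + δ⁻¹)..(ξ₀ - s + 2*δ⁻¹), ‖F ξ‖^2
        = ∫ ξ in (ξ₀ - s)..(ξ₀ - s + 2*δ⁻¹), ‖F ξ‖^2 :=
      intervalIntegral.integral_add_adjacent_intervals (hii _ _) (hii _ _)
    have h1 : 0 ≤ ∫ ξ in (ξ₀ - s)..ξ₀, ‖F ξ‖^2 :=
      intervalIntegral.integral_nonneg (by linarith [hs.1]) (fun u _ => sq_nonneg _)
    have h2 : 0 ≤ ∫ ξ in (ξ₀ + δ⁻¹)..(ξ₀ - s + 2*δ⁻¹), ‖F ξ‖^2 :=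
      intervalIntegral.integral_nonneg (by linarith [hs.2]) (fun u _ => sq_nonneg _)
    rw [hK]
    linarith
  -- step 2 : complex representation of the window integral
  set gC : ℝ → ℂ := fun s => ∑ p ∈ 𝒜 ×ˢ 𝒜, (coef p.1 * (starRingEnd ℂ) (coef p.2))
      * ∫ ξ in (ξ₀ - s)..(ξ₀ - s + 2*δ⁻¹),
          Complex.exp (Complex.I * ((p.1 - p.2 : ℝ):ℂ) * (ξ:ℂ)) with hgC
  have hgC_cont : Continuous gC := by
    rw [hgC]
    exact continuous_finset_sum _ (fun p _ => continuous_const.mul (Einner_cont _ _ _))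
  have hgrep : ∀ s : ℝ, (∫ ξ in (ξ₀ - s)..(ξ₀ - s + 2*δ⁻¹), ‖F ξ‖^2)
      = (gC s).re := fun s => integral_sq_abs 𝒜 coef _ _
  -- step 3 : average over s
  have hmono : (δ⁻¹ - 0) • K ≤ ∫ s in (0:ℝ)..δ⁻¹, (gC s).re := by
    rw [← intervalIntegral.integral_const (a := (0:ℝ)) (b := δ⁻¹) K]
    refine intervalIntegral.integral_mono_on hL.le (intervalIntegrable_const)
      ((Complex.continuous_re.comp hgC_cont).intervalIntegrable _ _) ?_
    intro s hs
    rw [← hgrep s]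
    exact hKle s hs
  -- step 4 : compute the s-integral
  have hswap : (∫ s in (0:ℝ)..δ⁻¹, (gC s).re)
      = (∑ p ∈ 𝒜 ×ˢ 𝒜, (coef p.1 * (starRingEnd ℂ) (coef p.2))
          * Phi δ ξ₀ (p.1 - p.2)).re := by
    have h1 : (∫ s in (0:ℝ)..δ⁻¹, (gC s).re) = (∫ s in (0:ℝ)..δ⁻¹, gC s).re := by
      have := Complex.reCLM.intervalIntegral_comp_comm
        (hgC_cont.intervalIntegrable (μ := MeasureTheory.volume) (0:ℝ) δ⁻¹)
      simpa [Complex.reCLM_apply] using this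
    rw [h1]
    congr 1
    rw [hgC]
    have h2 : (∫ s in (0:ℝ)..δ⁻¹, ∑ p ∈ 𝒜 ×ˢ 𝒜, (coef p.1 * (starRingEnd ℂ) (coef p.2))
        * ∫ ξ in (ξ₀ - s)..(ξ₀ - s + 2*δ⁻¹),
            Complex.exp (Complex.I * ((p.1 - p.2 : ℝ):ℂ) * (ξ:ℂ)))
        = ∑ p ∈ 𝒜 ×ˢ 𝒜, ∫ s in (0:ℝ)..δ⁻¹, (coef p.1 * (starRingEnd ℂ) (coef p.2))
          * ∫ ξ in (ξ₀ - s)..(ξ₀ - s + 2*δ⁻¹),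
              Complex.exp (Complex.I * ((p.1 - p.2 : ℝ):ℂ) * (ξ:ℂ)) :=
      intervalIntegral.integral_finset_sum
        (fun p _ => ((continuous_const.mul (Einner_cont _ _ _)).intervalIntegrable _ _))
    rw [h2]
    exact Finset.sum_congr rfl (fun p _ => intervalIntegral.integral_const_mul _ _)
  -- step 5 : take norms
  have hnorm : (∑ p ∈ 𝒜 ×ˢ 𝒜, (coef p.1 * (starRingEnd ℂ) (coef p.2))
      * Phi δ ξ₀ (p.1 - p.2)).re ≤ ∑ p ∈ 𝒜 ×ˢ 𝒜, ‖Phi δ ξ₀ (p.1 - p.2)‖ := by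
    calc (∑ p ∈ 𝒜 ×ˢ 𝒜, (coef p.1 * (starRingEnd ℂ) (coef p.2))
          * Phi δ ξ₀ (p.1 - p.2)).re
        ≤ ‖∑ p ∈ 𝒜 ×ˢ 𝒜, (coef p.1 * (starRingEnd ℂ) (coef p.2)) * Phi δ ξ₀ (p.1 - p.2)‖ := by
          exact Complex.re_le_norm _
      _ ≤ ∑ p ∈ 𝒜 ×ˢ 𝒜, ‖(coef p.1 * (starRingEnd ℂ) (coef p.2)) * Phi δ ξ₀ (p.1 - p.2)‖ :=
          norm_sum_le _ _
      _ ≤ ∑ p ∈ 𝒜 ×ˢ 𝒜, ‖Phi δ ξ₀ (p.1 - p.2)‖ := by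
          refine Finset.sum_le_sum (fun p hp => ?_)
          obtain ⟨hp1, hp2⟩ := Finset.mem_product.1 hp
          rw [norm_mul, norm_mul, RCLike.norm_conj,
            hcoef _ hp1, hcoef _ hp2]
          norm_num
  -- combine
  have hfinal : K ≤ δ * ∑ p ∈ 𝒜 ×ˢ 𝒜, ‖Phi δ ξ₀ (p.1 - p.2)‖ := by
    have hchain : (δ⁻¹ - 0) • K ≤ ∑ p ∈ 𝒜 ×ˢ 𝒜, ‖Phi δ ξ₀ (p.1 - p.2)‖ := by
      rw [hswap] at hmono
      exact le_trans hmono hnorm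
    rw [sub_zero, smul_eq_mul] at hchain
    have := mul_le_mul_of_nonneg_left hchain hδ.le
    rw [← mul_assoc, mul_inv_cancel₀ (ne_of_gt hδ), one_mul] at this
    exact this
  exact hfinal

end

set_option maxHeartbeats 1000000 in
/-- **Poisson localization (Bond–Volberg)**: there is an absolute constant `C > 0` such
that if `𝒜 ⊆ ℝ` is finite and `∫ (∑_{α∈𝒜} 1_{[α-δ,α+δ]})² ≤ S`, then for every `ξ₀ ∈ ℝ`
and every choice of unimodular coefficients `c_α`,
`δ² ∫_{ξ₀}^{ξ₀+δ⁻¹} |∑_{α∈𝒜} c_α e^{iαξ}|² dξ ≤ C S`. -/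
theorem poisson_localization_exponential_sum :
    ∃ C : ℝ, 0 < C ∧
      ∀ (δ : ℝ), 0 < δ → ∀ (𝒜 : Finset ℝ) (S : ℝ), 0 < S →
        (∫ x : ℝ, (∑ α ∈ 𝒜, Set.indicator (Set.Icc (α - δ) (α + δ)) (fun _ => (1 : ℝ)) x) ^ 2)
          ≤ S →
        ∀ (ξ₀ : ℝ) (coef : ℝ → ℂ), (∀ α ∈ 𝒜, ‖coef α‖ = 1) →
          δ ^ 2 * (∫ ξ in ξ₀..(ξ₀ + δ⁻¹),
              ‖∑ α ∈ 𝒜, coef α * Complex.exp (Complex.I * (α : ℂ) * (ξ : ℂ))‖ ^ 2)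
            ≤ C * S := by
  classical
  refine ⟨100, by norm_num, ?_⟩
  intro δ hδ 𝒜 S hS hInt ξ₀ coef hcoef
  have hδ2 : (0:ℝ) < 2*δ := by linarith
  have hInt' : (∫ x : ℝ, (fcnt δ 𝒜 x)^2) ≤ S := hInt
  have hA := analytic_bound δ ξ₀ hδ 𝒜 coef hcoef
  set Sig0 := ∑ p ∈ 𝒜 ×ˢ 𝒜, ‖Phi δ ξ₀ (p.1 - p.2)‖ with hSig0
  have h1 : δ ^ 2 * (∫ ξ in ξ₀..(ξ₀ + δ⁻¹),
      ‖∑ α ∈ 𝒜, coef α * Complex.exp (Complex.I * (α : ℂ) * (ξ : ℂ))‖ ^ 2)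
      ≤ δ ^ 2 * (δ * Sig0) := mul_le_mul_of_nonneg_left hA (by positivity)
  -- classes
  set cls : ℝ × ℝ → ℤ := fun p => ⌊(p.1 - p.2)/(2*δ)⌋ with hcls
  set T : Finset ℤ := (𝒜 ×ˢ 𝒜).image cls with hT
  have hfib : Sig0 = ∑ m ∈ T, ∑ p ∈ (𝒜 ×ˢ 𝒜).filter (fun p => cls p = m),
      ‖Phi δ ξ₀ (p.1 - p.2)‖ :=
    (Finset.sum_fiberwise_of_maps_to (fun p hp => Finset.mem_image_of_mem cls hp) _).symm
  -- floor bounds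
  have hfloor : ∀ (m : ℤ) (p : ℝ × ℝ), cls p = m →
      (m:ℝ)*(2*δ) ≤ p.1 - p.2 ∧ p.1 - p.2 < ((m:ℝ)+1)*(2*δ) := by
    intro m p hpm
    have h := Int.floor_eq_iff.1 hpm
    constructor
    · have := h.1
      rw [le_div_iff₀ hδ2] at this
      linarith
    · have := h.2
      rw [div_lt_iff₀ hδ2] at this
      push_cast at this ⊢
      linarith
  -- per-fiber bound on Phi
  have hPhi : ∀ m : ℤ, ∀ p ∈ (𝒜 ×ˢ 𝒜).filter (fun p => cls p = m),
      ‖Phi δ ξ₀ (p.1 - p.2)‖ ≤ uV m / δ^2 := by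
    intro m p hp
    obtain ⟨-, hpm⟩ := Finset.mem_filter.1 hp
    obtain ⟨hlow, hhigh⟩ := hfloor m p hpm
    by_cases hm0 : m = 0 ∨ m = -1
    · have huV : uV m = 2 := by unfold uV; rw [if_pos hm0]
      rw [huV]
      calc ‖Phi δ ξ₀ (p.1 - p.2)‖ ≤ 2 * δ⁻¹^2 := Phi_bound_one δ ξ₀ _ hδ
        _ = 2 / δ^2 := by field_simp
    · by_cases hmp : 0 < m
      · have huV : uV m = ((m:ℝ))⁻¹^2 := by unfold uV; rw [if_neg hm0, if_pos hmp]
        have hmge : (1:ℝ) ≤ (m:ℝ) := by exact_mod_cast hmp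
        have hmne : (m:ℝ) ≠ 0 := by positivity
        have htpos : 0 < p.1 - p.2 := lt_of_lt_of_le (by nlinarith) hlow
        calc ‖Phi δ ξ₀ (p.1 - p.2)‖ ≤ 4 / (p.1 - p.2)^2 :=
              Phi_bound_sq δ ξ₀ _ hδ (ne_of_gt htpos)
          _ ≤ 4 / ((m:ℝ)*(2*δ))^2 := by
              have hpos : 0 < (m:ℝ)*(2*δ) := by nlinarith
              exact div_le_div_of_nonneg_left (by norm_num) (pow_pos hpos 2)
                (pow_le_pow_left₀ hpos.le hlow 2)
          _ = uV m / δ^2 := by rw [huV]; field_simp; ring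
      · have hm2 : m ≤ -2 := by omega
        have huV : uV m = ((m:ℝ)+1)⁻¹^2 := by unfold uV; rw [if_neg hm0, if_neg hmp]
        have hmle : (m:ℝ)+1 ≤ -1 := by
          have : (m:ℝ) ≤ -2 := by exact_mod_cast hm2
          linarith
        have hane : ((m:ℝ)+1)*(2*δ) < 0 := by nlinarith
        have htneg : p.1 - p.2 < ((m:ℝ)+1)*(2*δ) := hhigh
        have htne : p.1 - p.2 ≠ 0 := by nlinarith
        have hsq : (((m:ℝ)+1)*(2*δ))^2 ≤ (p.1 - p.2)^2 := by nlinarith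
        calc ‖Phi δ ξ₀ (p.1 - p.2)‖ ≤ 4 / (p.1 - p.2)^2 :=
              Phi_bound_sq δ ξ₀ _ hδ htne
          _ ≤ 4 / (((m:ℝ)+1)*(2*δ))^2 := by
              have hb : 0 < (((m:ℝ)+1)*(2*δ))^2 := by nlinarith [mul_pos_of_neg_of_neg hane hane]
              exact div_le_div_of_nonneg_left (by norm_num) hb hsq
          _ = uV m / δ^2 := by
              rw [huV]
              have : ((m:ℝ)+1) ≠ 0 := by linarith
              field_simp
              ring
  -- per-fiber cardinality bound
  have hcard : ∀ m : ℤ,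
      δ * (((𝒜 ×ˢ 𝒜).filter (fun p => cls p = m)).card : ℝ) ≤ S := by
    intro m
    have hsub : (𝒜 ×ˢ 𝒜).filter (fun p => cls p = m)
        ⊆ (𝒜 ×ˢ 𝒜).filter (fun p => |p.1 - p.2 - ((2*(m:ℝ)+1)*δ)| ≤ δ) := by
      intro p hp
      obtain ⟨hpmem, hpm⟩ := Finset.mem_filter.1 hp
      obtain ⟨hlow, hhigh⟩ := hfloor m p hpm
      refine Finset.mem_filter.2 ⟨hpmem, abs_le.2 ⟨by linarith, by linarith⟩⟩
    have hle : (((𝒜 ×ˢ 𝒜).filter (fun p => cls p = m)).card : ℝ)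
        ≤ (((𝒜 ×ˢ 𝒜).filter (fun p => |p.1 - p.2 - ((2*(m:ℝ)+1)*δ)| ≤ δ)).card : ℝ) := by
      exact_mod_cast Finset.card_le_card hsub
    calc δ * (((𝒜 ×ˢ 𝒜).filter (fun p => cls p = m)).card : ℝ)
        ≤ δ * (((𝒜 ×ˢ 𝒜).filter
            (fun p => |p.1 - p.2 - ((2*(m:ℝ)+1)*δ)| ≤ δ)).card : ℝ) := by
          exact mul_le_mul_of_nonneg_left hle hδ.le
      _ ≤ S := class_count δ hδ 𝒜 S hInt' ((2*(m:ℝ)+1)*δ)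
  -- assemble
  have h2 : δ ^ 2 * (δ * Sig0) ≤ 8 * S := by
    rw [hfib]
    calc δ ^ 2 * (δ * ∑ m ∈ T, ∑ p ∈ (𝒜 ×ˢ 𝒜).filter (fun p => cls p = m),
          ‖Phi δ ξ₀ (p.1 - p.2)‖)
        ≤ δ ^ 2 * (δ * ∑ m ∈ T,
            (((𝒜 ×ˢ 𝒜).filter (fun p => cls p = m)).card : ℝ) * (uV m / δ^2)) := by
          refine mul_le_mul_of_nonneg_left (mul_le_mul_of_nonneg_left ?_ hδ.le) (by positivity)
          refine Finset.sum_le_sum (fun m _ => ?_)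
          have := Finset.sum_le_card_nsmul _ _ _ (hPhi m)
          rwa [nsmul_eq_mul] at this
      _ = ∑ m ∈ T, (δ * (((𝒜 ×ˢ 𝒜).filter (fun p => cls p = m)).card : ℝ)) * uV m := by
          rw [Finset.mul_sum, Finset.mul_sum]
          refine Finset.sum_congr rfl (fun m _ => ?_)
          field_simp
      _ ≤ ∑ m ∈ T, S * uV m := by
          refine Finset.sum_le_sum (fun m _ => ?_)
          exact mul_le_mul_of_nonneg_right (hcard m) (uV_nonneg m)
      _ = S * ∑ m ∈ T, uV m := by rw [Finset.mul_sum]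
      _ ≤ S * 8 := mul_le_mul_of_nonneg_left (uV_sum_le T) hS.le
      _ = 8 * S := by ring
  calc δ ^ 2 * (∫ ξ in ξ₀..(ξ₀ + δ⁻¹),
        ‖∑ α ∈ 𝒜, coef α * Complex.exp (Complex.I * (α : ℂ) * (ξ : ℂ))‖ ^ 2)
      ≤ 8 * S := le_trans h1 h2
    _ ≤ 100 * S := by linarith

end
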